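/- arXiv:1302.0450 — 2 statements merged into one kernel-verified Lean document; each statement's English description precedes it below -/
import Mathlib

section
/- Let L be an n×n symmetric matrix and for an index i let [L]ᵢ denote the principal submatrix obtained by deleting row and column i. Then for consecutive indices i and i+1, the difference [L]_{i+1} − [L]_i is a matrix of rank at most 2; specifically [L]_{i+1} − [L]_i = eᵢ ξᵀ + ξ eᵢᵀ for a suitable vector ξ depending on the entries of rows i and i+1 of L. -/
open Matrix

theorem consecutive_principal_submatrix_diff_rank_two {n : ℕ}
    (L : Matrix (Fin (n + 1)) (Fin (n + 1)) ℝ) (hL : L.IsSymm) (i : Fin n) :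
    ∃ ξ : Fin n → ℝ,
      L.submatrix (i.succ).succAbove (i.succ).succAbove -
          L.submatrix (i.castSucc).succAbove (i.castSucc).succAbove =
        Matrix.vecMulVec (Pi.single i 1) ξ + Matrix.vecMulVec ξ (Pi.single i 1) := by
  set f := (i.succ).succAbove with hf
  set g := (i.castSucc).succAbove with hg
  have hfg : ∀ j : Fin n, j ≠ i → f j = g j := by
    intro j hj
    rcases lt_or_gt_of_ne hj with h | h
    · rw [hf, hg, Fin.succAbove_of_castSucc_lt, Fin.succAbove_of_castSucc_lt]
      · exact_mod_cast h
      · exact lt_of_le_of_lt (by exact_mod_cast h.le) (Fin.castSucc_lt_succ : i.castSucc < i.succ)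
    · rw [hf, hg, Fin.succAbove_of_le_castSucc, Fin.succAbove_of_le_castSucc]
      · exact_mod_cast h.le
      · exact Fin.succ_le_castSucc_iff.mpr (by exact_mod_cast h)
  have hfi : f i = i.castSucc := by
    rw [hf, Fin.succAbove_of_castSucc_lt _ _ (Fin.castSucc_lt_succ : i.castSucc < i.succ)]
  have hgi : g i = i.succ := by
    rw [hg, Fin.succAbove_of_le_castSucc _ _ le_rfl]
  have hsym : ∀ a b, L a b = L b a := fun a b => (Matrix.IsSymm.apply hL a b).symm ▸ rfl
  refine ⟨fun k => if k = i then (L i.castSucc i.castSucc - L i.succ i.succ) / 2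
    else L i.castSucc (g k) - L i.succ (g k), ?_⟩
  ext j k
  simp only [Matrix.sub_apply, Matrix.submatrix_apply, Matrix.add_apply,
    Matrix.vecMulVec_apply]
  by_cases hj : j = i <;> by_cases hk : k = i
  · subst hj; subst hk
    simp [hfi, hgi]
  · subst hj
    simp [Pi.single_apply, hk, hfi, hgi, hfg k hk]
  · subst hk
    simp [Pi.single_apply, hj, hfg j hj, hfi, hgi, hsym (g j)]
  · simp [Pi.single_apply, hj, hk, hfg j hj, hfg k hk]
end

section
/- With the notation of the Schur complement formula above, suppose L_l − L₀ L_f⁻¹ L₀ᵀ is symmetric positive semidefinite and D = t·I with t → ∞. Then S_t := L_l + t·I − L₀ L_f⁻¹ L₀ᵀ is invertible for large t, ‖S_t⁻¹‖ → 0, and hence trace(L⁻¹(t)) → trace(L_f⁻¹) as t → ∞, where L(t) = [[L_l + t I, L₀],[L₀ᵀ, L_f]]. -/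
open Matrix Filter Topology

lemma psd_add_smul_one_posDef {p : ℕ} {M : Matrix (Fin p) (Fin p) ℝ}
    (hM : M.PosSemidef) {t : ℝ} (ht : 0 < t) :
    (M + t • (1 : Matrix (Fin p) (Fin p) ℝ)).PosDef := by
  refine posDef_iff_dotProduct_mulVec.mpr ⟨hM.1.add ?_, fun x hx => ?_⟩
  · simp [Matrix.IsHermitian, conjTranspose_smul, conjTranspose_one]
  · have h1 : (M + t • (1 : Matrix (Fin p) (Fin p) ℝ)) *ᵥ x = M *ᵥ x + t • x := by
      simp [Matrix.add_mulVec, Matrix.smul_mulVec]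
    rw [h1, dotProduct_add]
    have h2 : (0:ℝ) < dotProduct (star x) (t • x) := by
      rw [dotProduct_smul]
      exact mul_pos ht (dotProduct_star_self_pos_iff.mpr hx)
    exact lt_of_lt_of_le h2 (le_add_of_nonneg_left ((posSemidef_iff_dotProduct_mulVec.mp hM).2 x))

lemma my_trace_fromBlocks {p q : ℕ} (A : Matrix (Fin p) (Fin p) ℝ) (B : Matrix (Fin p) (Fin q) ℝ)
    (C : Matrix (Fin q) (Fin p) ℝ) (D : Matrix (Fin q) (Fin q) ℝ) :
    (Matrix.fromBlocks A B C D).trace = A.trace + D.trace := by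
  simp [Matrix.trace, Matrix.diag, Fintype.sum_sum_type]

theorem trace_inv_tendsto_noise_free {p q : ℕ}
    (Ll : Matrix (Fin p) (Fin p) ℝ) (hLl : Ll.IsSymm)
    (L0 : Matrix (Fin p) (Fin q) ℝ)
    (Lf : Matrix (Fin q) (Fin q) ℝ) (hLf : Lf.PosDef)
    (hPSD : (Ll - L0 * Lf⁻¹ * L0ᵀ).PosSemidef) :
    (∀ᶠ t : ℝ in atTop, IsUnit (Ll + t • (1 : Matrix (Fin p) (Fin p) ℝ) - L0 * Lf⁻¹ * L0ᵀ).det) ∧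
    Tendsto (fun t : ℝ => (Ll + t • (1 : Matrix (Fin p) (Fin p) ℝ) - L0 * Lf⁻¹ * L0ᵀ)⁻¹)
      atTop (𝓝 0) ∧
    Tendsto (fun t : ℝ =>
        ((Matrix.fromBlocks (Ll + t • (1 : Matrix (Fin p) (Fin p) ℝ)) L0 L0ᵀ Lf)⁻¹).trace)
      atTop (𝓝 (Lf⁻¹).trace) := by
  set M : Matrix (Fin p) (Fin p) ℝ := Ll - L0 * Lf⁻¹ * L0ᵀ with hMdef
  have hSeq : ∀ t : ℝ, Ll + t • (1 : Matrix (Fin p) (Fin p) ℝ) - L0 * Lf⁻¹ * L0ᵀ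
      = M + t • (1 : Matrix (Fin p) (Fin p) ℝ) := by
    intro t; rw [hMdef]; abel
  have hPD : ∀ t : ℝ, 0 < t → (M + t • (1 : Matrix (Fin p) (Fin p) ℝ)).PosDef :=
    fun t ht => psd_add_smul_one_posDef hPSD ht
  -- Part 1
  have part1 : ∀ᶠ t : ℝ in atTop,
      IsUnit (Ll + t • (1 : Matrix (Fin p) (Fin p) ℝ) - L0 * Lf⁻¹ * L0ᵀ).det := by
    filter_upwards [eventually_gt_atTop (0:ℝ)] with t ht
    rw [hSeq t]
    exact (hPD t ht).det_pos.ne'.isUnit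
  -- Part 2
  have part2 : Tendsto
      (fun t : ℝ => (Ll + t • (1 : Matrix (Fin p) (Fin p) ℝ) - L0 * Lf⁻¹ * L0ᵀ)⁻¹)
      atTop (𝓝 0) := by
    have hlim1 : Tendsto (fun t : ℝ => t⁻¹ • M + 1) atTop
        (𝓝 (1 : Matrix (Fin p) (Fin p) ℝ)) := by
      have : Tendsto (fun t : ℝ => t⁻¹ • M) atTop (𝓝 (0 : Matrix (Fin p) (Fin p) ℝ)) := by
        have := (tendsto_inv_atTop_zero (𝕜 := ℝ)).smul_const M
        simpa using this
      simpa using this.add_const (1 : Matrix (Fin p) (Fin p) ℝ)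
    have hcont : ContinuousAt Inv.inv (1 : Matrix (Fin p) (Fin p) ℝ) := by
      apply continuousAt_matrix_inv
      simp only [det_one]
      exact NormedRing.inverse_continuousAt (1 : ℝˣ)
    have hlim2 : Tendsto (fun t : ℝ => (t⁻¹ • M + 1)⁻¹) atTop
        (𝓝 (1 : Matrix (Fin p) (Fin p) ℝ)) := by
      have := hcont.tendsto.comp hlim1
      simpa [Function.comp_def] using this
    have hlim3 : Tendsto (fun t : ℝ => t⁻¹ • (t⁻¹ • M + 1)⁻¹) atTop
        (𝓝 (0 : Matrix (Fin p) (Fin p) ℝ)) := by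
      have := (tendsto_inv_atTop_zero (𝕜 := ℝ)).smul hlim2
      simpa using this
    refine hlim3.congr' ?_
    filter_upwards [eventually_gt_atTop (0:ℝ)] with t ht
    have ht0 : t ≠ 0 := ht.ne'
    have hfactor : M + t • (1 : Matrix (Fin p) (Fin p) ℝ) = t • (t⁻¹ • M + 1) := by
      rw [smul_add, smul_smul, mul_inv_cancel₀ ht0, one_smul]
    haveI hu : Invertible (t : ℝ) := invertibleOfNonzero ht0
    have hdet : IsUnit (t⁻¹ • M + 1).det := by
      have heq : (t⁻¹ • M + 1) = t⁻¹ • (M + t • (1 : Matrix (Fin p) (Fin p) ℝ)) := by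
        rw [smul_add, smul_smul, inv_mul_cancel₀ ht0, one_smul]
      rw [heq, det_smul]
      exact (IsUnit.pow _ (isUnit_iff_ne_zero.mpr (inv_ne_zero ht0))).mul
        (hPD t ht).det_pos.ne'.isUnit
    rw [hSeq t, hfactor, Matrix.inv_smul (A := t⁻¹ • M + 1) (k := t) hdet, invOf_eq_inv]
  refine ⟨part1, part2, ?_⟩
  -- Part 3
  have hLfU : IsUnit Lf.det := hLf.det_pos.ne'.isUnit
  haveI iLf : Invertible Lf := invertibleOfIsUnitDet Lf hLfU
  have hiLf : ⅟Lf = Lf⁻¹ := invOf_eq_nonsing_inv Lf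
  have hF : Continuous (fun X : Matrix (Fin p) (Fin p) ℝ =>
      X.trace + (Lf⁻¹ + Lf⁻¹ * L0ᵀ * X * L0 * Lf⁻¹).trace) := by
    refine Continuous.add (continuous_id.matrix_trace) ?_
    refine Continuous.matrix_trace ?_
    refine Continuous.add continuous_const ?_
    exact ((((continuous_const.matrix_mul continuous_id).matrix_mul
      continuous_const)).matrix_mul continuous_const)
  have hlim : Tendsto (fun t : ℝ =>
      ((Ll + t • (1 : Matrix (Fin p) (Fin p) ℝ) - L0 * Lf⁻¹ * L0ᵀ)⁻¹).trace +
      (Lf⁻¹ + Lf⁻¹ * L0ᵀ * (Ll + t • (1 : Matrix (Fin p) (Fin p) ℝ) - L0 * Lf⁻¹ * L0ᵀ)⁻¹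
        * L0 * Lf⁻¹).trace) atTop (𝓝 (Lf⁻¹).trace) := by
    have := (hF.tendsto 0).comp part2
    simpa [Function.comp_def] using this
  refine hlim.congr' ?_
  filter_upwards [eventually_gt_atTop (0:ℝ)] with t ht
  set A : Matrix (Fin p) (Fin p) ℝ := Ll + t • (1 : Matrix (Fin p) (Fin p) ℝ) with hAdef
  haveI iS : Invertible (A - L0 * ⅟Lf * L0ᵀ) := by
    rw [hiLf, hAdef, hSeq t]
    exact (hPD t ht).isUnit.invertible
  have hiS : ⅟(A - L0 * ⅟Lf * L0ᵀ) = (A - L0 * Lf⁻¹ * L0ᵀ)⁻¹ := by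
    rw [invOf_eq_nonsing_inv, hiLf]
  haveI iFB : Invertible (Matrix.fromBlocks A L0 L0ᵀ Lf) :=
    Matrix.fromBlocks₂₂Invertible A L0 L0ᵀ Lf
  rw [← invOf_eq_nonsing_inv (Matrix.fromBlocks A L0 L0ᵀ Lf),
    Matrix.invOf_fromBlocks₂₂_eq, my_trace_fromBlocks, hiS, hiLf]
end
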